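/- If w is a b-ary (k,l)-nested semi-perfect necklace, then l ≥ k/2. -/
import Mathlib


/-- A word `w` (of length `l * b ^ k`, read cyclically, over the alphabet `ZMod b`)
is a `(k, l)`-semi-perfect `b`-ary necklace: each word of length `k` occurs
exactly `l` times (occurrences counted cyclically). -/
def SemiPerfectNecklace (b k l : ℕ) (w : ℕ → ZMod b) : Prop :=
  ∀ v : Fin k → ZMod b,
    ((Finset.range (l * b ^ k)).filter
      (fun i => ∀ s : Fin k, w ((i + (s : ℕ)) % (l * b ^ k)) = v s)).card = l

/-- A word of length `l * b ^ k` is a `(k, l)`-nested semi-perfect `b`-ary necklace: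
for each `j ∈ {1, …, k}`, each block of length `l * b ^ j` starting at a position
congruent to `1` modulo `l * b ^ j` (i.e. at a multiple of `l * b ^ j` in 0-based
indexing) is a `(j, l)`-semi-perfect necklace. -/
def NestedSemiPerfectNecklace (b k l : ℕ) (w : ℕ → ZMod b) : Prop :=
  ∀ j, 1 ≤ j → j ≤ k → ∀ a : ℕ, (a + 1) * (l * b ^ j) ≤ l * b ^ k →
    SemiPerfectNecklace b j l (fun i => w (a * (l * b ^ j) + i))

theorem nested_semi_perfect_necklace_le (b k l : ℕ) (hb : 2 ≤ b) (hk : 1 ≤ k)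
    (hl : 1 ≤ l) (w : ℕ → ZMod b) (hw : NestedSemiPerfectNecklace b k l w) :
    k ≤ 2 * l := by
  by_contra hcon
  push_neg at hcon
  have hb0 : 0 < b := by omega
  have hl0 : 0 < l := hl
  have hLpos : 0 < l * b := by positivity
  have hNpos : 0 < l * b ^ k := by positivity
  have hdvd : l * b * b ^ (k - 1) = l * b ^ k := by
    rw [mul_assoc, ← pow_succ']
    congr 2
    omega
  have hlL : l < l * b := by
    have h2 := Nat.mul_le_mul_left l hb
    omega
  have hLleN : l * b ≤ l * b ^ k := by
    have h1 : b ^ 1 ≤ b ^ k := Nat.pow_le_pow_right (by omega) hk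
    rw [pow_one] at h1
    exact Nat.mul_le_mul_left l h1
  -- segment counting lemma
  have seg : ∀ a i c, a * (l * b) + l * b ≤ l * b ^ k → a * (l * b) ≤ i →
      i + c ≤ a * (l * b) + l * b → (∀ s, s < c → w (i + s) = 0) → c ≤ l := by
    intro a i c hA hai hic hz
    have hblock := hw 1 le_rfl hk a (by rw [pow_one, add_mul, one_mul]; exact hA)
    have hcard := hblock (fun _ => 0)
    simp only [pow_one] at hcard
    have hsub : (Finset.range c).image (fun s => i - a * (l * b) + s) ⊆
        (Finset.range (l * b)).filter
          (fun t => ∀ s : Fin 1, w (a * (l * b) + (t + (s : ℕ)) % (l * b)) = 0) := by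
      intro t ht
      simp only [Finset.mem_image, Finset.mem_range] at ht
      obtain ⟨s, hs, rfl⟩ := ht
      have h1 : i - a * (l * b) + s < l * b := by omega
      refine Finset.mem_filter.mpr ⟨Finset.mem_range.mpr h1, ?_⟩
      intro u
      have hu0 : (u : ℕ) = 0 := by have := u.isLt; omega
      rw [hu0, Nat.add_zero, Nat.mod_eq_of_lt h1,
        show a * (l * b) + (i - a * (l * b) + s) = i + s from by omega]
      exact hz s hs
    have hle := Finset.card_le_card hsub
    rw [hcard, Finset.card_image_of_injective _ (fun x y hxy => by omega),
      Finset.card_range] at hle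
    exact hle
  -- find a run of k zeros
  have h0 := hw k hk le_rfl 0 (by simp)
  have hcard0 := h0 (fun _ => 0)
  obtain ⟨i, hi⟩ := Finset.card_pos.mp (by rw [hcard0]; omega)
  obtain ⟨hiN, hzero⟩ := Finset.mem_filter.mp hi
  rw [Finset.mem_range] at hiN
  simp only [zero_mul, zero_add] at hzero
  -- block of i
  set a1 := i / (l * b) with ha1def
  have hdm := Nat.div_add_mod i (l * b)
  rw [← ha1def] at hdm
  obtain ⟨r, hr⟩ : ∃ r, r = i % (l * b) := ⟨_, rfl⟩
  rw [← hr] at hdm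
  have hmlt : r < l * b := by rw [hr]; exact Nat.mod_lt _ hLpos
  have hcomm : a1 * (l * b) = l * b * a1 := Nat.mul_comm _ _
  have ha1i : a1 * (l * b) ≤ i ∧ i < a1 * (l * b) + l * b := by omega
  have ha1d : a1 < b ^ (k - 1) := by
    rw [ha1def, Nat.div_lt_iff_lt_mul hLpos]
    calc i < l * b ^ k := hiN
    _ = b ^ (k - 1) * (l * b) := by rw [← hdvd]; ring
  have hmN : a1 * (l * b) + l * b ≤ l * b ^ k := by
    calc a1 * (l * b) + l * b = (a1 + 1) * (l * b) := by ring
    _ ≤ b ^ (k - 1) * (l * b) := Nat.mul_le_mul_right _ ha1d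
    _ = l * b ^ k := by rw [← hdvd]; ring
  by_cases hcase : k ≤ a1 * (l * b) + l * b - i
  · -- whole run inside block a1
    have hkl : k ≤ l := by
      refine seg a1 i k hmN ha1i.1 (by omega) ?_
      intro s hs
      have h := hzero ⟨s, hs⟩
      rw [show ((⟨s, hs⟩ : Fin k) : ℕ) = s from rfl] at h
      rwa [Nat.mod_eq_of_lt (by omega)] at h
    omega
  · push_neg at hcase
    have hc1 : a1 * (l * b) + l * b - i ≤ l := by
      refine seg a1 i (a1 * (l * b) + l * b - i) hmN ha1i.1 (by omega) ?_
      intro s hs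
      have hsk : s < k := by omega
      have h := hzero ⟨s, hsk⟩
      rw [show ((⟨s, hsk⟩ : Fin k) : ℕ) = s from rfl] at h
      rwa [Nat.mod_eq_of_lt (by omega)] at h
    -- the following block
    obtain ⟨a2, hm', hm'N⟩ : ∃ a2, (a1 * (l * b) + l * b) % (l * b ^ k) = a2 * (l * b) ∧
        a2 * (l * b) + l * b ≤ l * b ^ k := by
      rcases eq_or_lt_of_le hmN with h | h
      · exact ⟨0, by rw [h, Nat.mod_self, zero_mul], by simpa using hLleN⟩
      · refine ⟨a1 + 1, by rw [Nat.mod_eq_of_lt h]; ring, ?_⟩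
        have hd1 : l * b ∣ (l * b ^ k - (a1 * (l * b) + l * b)) :=
          Nat.dvd_sub ⟨b ^ (k - 1), hdvd.symm⟩ ⟨a1 + 1, by ring⟩
        have h2 := Nat.le_of_dvd (by omega) hd1
        have h3 : (a1 + 1) * (l * b) = a1 * (l * b) + l * b := by ring
        omega
    have hmod : ∀ t, t < l * b → (a1 * (l * b) + l * b + t) % (l * b ^ k) = a2 * (l * b) + t := by
      intro t ht
      rw [Nat.add_mod, hm', Nat.mod_eq_of_lt (show t < l * b ^ k by omega),
        Nat.mod_eq_of_lt (by omega)]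
    have hz2 : ∀ t, t < l * b → (a1 * (l * b) + l * b - i) + t < k → w (a2 * (l * b) + t) = 0 := by
      intro t ht htk
      have h := hzero ⟨(a1 * (l * b) + l * b - i) + t, htk⟩
      rw [show ((⟨(a1 * (l * b) + l * b - i) + t, htk⟩ : Fin k) : ℕ)
          = (a1 * (l * b) + l * b - i) + t from rfl] at h
      rw [show i + ((a1 * (l * b) + l * b - i) + t) = a1 * (l * b) + l * b + t from by omega] at h
      rwa [hmod t ht] at h
    have hc2b : k - (a1 * (l * b) + l * b - i) ≤ l * b := by
      by_contra hfull
      push_neg at hfull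
      have : l * b ≤ l := by
        refine seg a2 (a2 * (l * b)) (l * b) hm'N le_rfl (by omega) ?_
        intro s hs
        exact hz2 s hs (by omega)
      omega
    have hc2 : k - (a1 * (l * b) + l * b - i) ≤ l := by
      refine seg a2 (a2 * (l * b)) (k - (a1 * (l * b) + l * b - i)) hm'N le_rfl (by omega) ?_
      intro s hs
      exact hz2 s (by omega) (by omega)
    omega
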